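/- Let R be a Noetherian commutative ring containing ℚ and let J be an ideal of the formal power series ring R⟦X⟧ that is stable under the formal derivative d/dX. Then J is generated by its constant coefficients: J = (J ∩ R)·R⟦X⟧, where J ∩ R is viewed via the inclusion of R as constant series. -/

import Mathlib

open PowerSeries Finset

namespace Stmt1Aux

variable {R : Type*} [CommRing R]

theorem eq_zero_of_forall_X_pow_dvd {y : R⟦X⟧} (h : ∀ j : ℕ, (X : R⟦X⟧) ^ j ∣ y) :
    y = 0 := by
  ext p
  rw [map_zero]
  exact X_pow_dvd_iff.mp (h (p + 1)) p (Nat.lt_succ_self p)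

/-- Successive approximation: if `f` can be approximated to arbitrary `X`-adic precision by
elements of `J`, and finitely many elements of `J ∩ (X^n₀)` have `n₀`-th coefficients generating
all leading coefficients of `J ∩ (X^m)` for `m ≥ n₀`, then `f ∈ J`. -/
theorem closure_aux (J : Ideal R⟦X⟧) (n₀ : ℕ) {ι : Type*} [Fintype ι]
    (h : ι → R⟦X⟧) (hmem : ∀ i, h i ∈ J) (hdvd : ∀ i, (X : R⟦X⟧) ^ n₀ ∣ h i)
    (hB : ∀ m, n₀ ≤ m → ∀ g ∈ J, (X : R⟦X⟧) ^ m ∣ g →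
      ∃ c : ι → R, coeff m g = ∑ i, c i * coeff n₀ (h i))
    (f : R⟦X⟧) (hf : ∀ N, ∃ g ∈ J, (X : R⟦X⟧) ^ N ∣ (f - g)) : f ∈ J := by
  classical
  obtain ⟨g₀, hg₀J, hg₀⟩ := hf n₀
  set P : ℕ → R⟦X⟧ → Prop := fun j w =>
    ((X : R⟦X⟧) ^ (n₀ + j) ∣ w) ∧ ∀ N, ∃ g ∈ J, (X : R⟦X⟧) ^ N ∣ (w - g) with hP
  have hP0 : P 0 (f - g₀) := by
    constructor
    · simpa using hg₀
    · intro N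
      obtain ⟨g, hgJ, hgd⟩ := hf N
      exact ⟨g - g₀, sub_mem hgJ hg₀J,
        by rw [show f - g₀ - (g - g₀) = f - g by ring]; exact hgd⟩
  have step : ∀ (j : ℕ) (w : R⟦X⟧), P j w →
      ∃ c : ι → R, P (j + 1) (w - ∑ i, C (c i) * ((X : R⟦X⟧) ^ j * h i)) := by
    rintro j w ⟨hd, hap⟩
    obtain ⟨g, hgJ, hgd⟩ := hap (n₀ + j + 1)
    have hwg : (X : R⟦X⟧) ^ (n₀ + j) ∣ (w - g) :=
      dvd_trans (pow_dvd_pow X (Nat.le_succ _)) hgd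
    have hgdvd : (X : R⟦X⟧) ^ (n₀ + j) ∣ g := by
      have hg' : g = w - (w - g) := by ring
      rw [hg']; exact dvd_sub hd hwg
    have hcoef : coeff (n₀ + j) g = coeff (n₀ + j) w := by
      have h0 : coeff (n₀ + j) (w - g) = 0 :=
        X_pow_dvd_iff.mp hgd (n₀ + j) (Nat.lt_succ_self _)
      rw [map_sub, sub_eq_zero] at h0
      exact h0.symm
    obtain ⟨c, hc⟩ := hB (n₀ + j) (Nat.le_add_right _ _) g hgJ hgdvd
    refine ⟨c, ?_, ?_⟩
    · rw [X_pow_dvd_iff]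
      intro m hm
      have hterm : ∀ i, (X : R⟦X⟧) ^ (n₀ + j) ∣ C (c i) * ((X : R⟦X⟧) ^ j * h i) := by
        intro i
        obtain ⟨u, hu⟩ := hdvd i
        refine Dvd.dvd.mul_left ?_ _
        rw [hu, pow_add]
        exact ⟨u, by ring⟩
      rcases Nat.lt_or_ge m (n₀ + j) with hlt | hge
      · rw [map_sub, X_pow_dvd_iff.mp hd m hlt,
          X_pow_dvd_iff.mp (Finset.dvd_sum fun i _ => hterm i) m hlt, sub_zero]
      · have hme : m = n₀ + j := le_antisymm (Nat.lt_succ_iff.mp hm) hge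
        subst hme
        rw [map_sub, map_sum]
        have hco : ∀ i, coeff (n₀ + j) (C (c i) * ((X : R⟦X⟧) ^ j * h i))
            = c i * coeff n₀ (h i) := by
          intro i
          rw [coeff_C_mul, coeff_X_pow_mul]
        rw [Finset.sum_congr rfl fun i _ => hco i, ← hc, hcoef, sub_self]
    · intro N
      obtain ⟨g', hg'J, hg'd⟩ := hap N
      refine ⟨g' - ∑ i, C (c i) * ((X : R⟦X⟧) ^ j * h i),
        sub_mem hg'J (Ideal.sum_mem _ fun i _ =>
          Ideal.mul_mem_left _ _ (Ideal.mul_mem_left _ _ (hmem i))), ?_⟩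
      rw [show w - ∑ i, C (c i) * ((X : R⟦X⟧) ^ j * h i)
          - (g' - ∑ i, C (c i) * ((X : R⟦X⟧) ^ j * h i)) = w - g' by ring]
      exact hg'd
  choose cf hcf using step
  let seq : ∀ j : ℕ, {w : R⟦X⟧ // P j w} := fun j =>
    Nat.rec (motive := fun j => {w : R⟦X⟧ // P j w}) ⟨f - g₀, hP0⟩
      (fun j p => ⟨p.1 - ∑ i, C (cf j p.1 p.2 i) * ((X : R⟦X⟧) ^ j * h i),
        hcf j p.1 p.2⟩) j
  let c : ℕ → ι → R := fun j => cf j (seq j).1 (seq j).2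
  have hseq : ∀ j, (seq (j + 1)).1
      = (seq j).1 - ∑ i, C (c j i) * ((X : R⟦X⟧) ^ j * h i) := fun j => rfl
  let v : ι → R⟦X⟧ := fun i => mk fun l => c l i
  have key : ∀ j, (seq j).1
      = (f - g₀) - ∑ i, (∑ l ∈ Finset.range j, C (c l i) * (X : R⟦X⟧) ^ l) * h i := by
    intro j
    induction j with
    | zero => simp [seq]
    | succ j ih =>
      rw [hseq j, ih]
      have hsp : ∀ i, (∑ l ∈ Finset.range (j + 1), C (c l i) * (X : R⟦X⟧) ^ l) * h i
          = (∑ l ∈ Finset.range j, C (c l i) * (X : R⟦X⟧) ^ l) * h i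
            + C (c j i) * ((X : R⟦X⟧) ^ j * h i) := by
        intro i; rw [Finset.sum_range_succ]; ring
      rw [Finset.sum_congr rfl fun i _ => hsp i, Finset.sum_add_distrib]
      ring
  have hzero : f - g₀ - ∑ i, v i * h i = 0 := by
    apply eq_zero_of_forall_X_pow_dvd
    intro j
    have hrew : f - g₀ - ∑ i, v i * h i
        = (seq j).1
          + ∑ i, ((∑ l ∈ Finset.range j, C (c l i) * (X : R⟦X⟧) ^ l) - v i) * h i := by
      rw [key j, Finset.sum_congr rfl
        (fun i (_ : i ∈ Finset.univ) => sub_mul (∑ l ∈ Finset.range j, C (c l i) * X ^ l)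
          (v i) (h i)), Finset.sum_sub_distrib]
      ring
    rw [hrew]
    refine dvd_add (dvd_trans (pow_dvd_pow X (Nat.le_add_left j n₀)) (seq j).2.1)
      (Finset.dvd_sum fun i _ => dvd_mul_of_dvd_left ?_ _)
    rw [X_pow_dvd_iff]
    intro m hm
    rw [map_sub, map_sum]
    have hpc : ∀ l, coeff m (C (c l i) * (X : R⟦X⟧) ^ l)
        = if m = l then c l i else 0 := fun l => coeff_C_mul_X_pow _ _ _
    rw [Finset.sum_congr rfl fun l _ => hpc l, Finset.sum_ite_eq (Finset.range j) m
      (fun l => c l i), if_pos (Finset.mem_range.mpr hm)]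
    simp [v]
  have hfeq : f = g₀ + ∑ i, v i * h i := by linear_combination hzero
  rw [hfeq]
  exact J.add_mem hg₀J (Ideal.sum_mem _ fun i _ => Ideal.mul_mem_left _ _ (hmem i))

/-- In `R⟦X⟧` over a Noetherian ring, ideals are `X`-adically closed. -/
theorem mem_of_forall_approx [IsNoetherianRing R] (J : Ideal R⟦X⟧) (f : R⟦X⟧)
    (hf : ∀ N, ∃ g ∈ J, (X : R⟦X⟧) ^ N ∣ (f - g)) : f ∈ J := by
  classical
  -- leading coefficient ideals
  let B : ℕ →o Ideal R :=
    ⟨fun m => Submodule.map (coeff m)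
      ((Submodule.restrictScalars R J) ⊓
        (Submodule.restrictScalars R (Ideal.span {(X : R⟦X⟧) ^ m}))), by
      apply monotone_nat_of_le_succ
      intro m r hr
      obtain ⟨w, hw, hcw⟩ := hr
      refine ⟨X * w, ⟨J.mul_mem_left X hw.1, ?_⟩, by rw [coeff_succ_X_mul]; exact hcw⟩
      have : (X : R⟦X⟧) ^ m ∣ w := Ideal.mem_span_singleton.mp hw.2
      exact Ideal.mem_span_singleton.mpr (by rw [pow_succ']; exact mul_dvd_mul_left X this)⟩
  obtain ⟨n₀, hn₀⟩ := monotone_stabilizes_iff_noetherian.mpr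
    (inferInstance : IsNoetherian R R) B
  obtain ⟨S, hS⟩ := IsNoetherian.noetherian (B n₀)
  have hwit : ∀ i : {x // x ∈ S}, ∃ w : R⟦X⟧,
      (w ∈ J ∧ (X : R⟦X⟧) ^ n₀ ∣ w) ∧ coeff n₀ w = (i : R) := by
    rintro ⟨i, hi⟩
    have : i ∈ B n₀ := hS ▸ Submodule.subset_span hi
    obtain ⟨w, hw, hcw⟩ := this
    exact ⟨w, ⟨hw.1, Ideal.mem_span_singleton.mp hw.2⟩, hcw⟩
  choose h hh hch using hwit
  apply closure_aux J n₀ h (fun i => (hh i).1) (fun i => (hh i).2) ?_ f hf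
  intro m hm g hgJ hgd
  have hmem : coeff m g ∈ B n₀ := by
    rw [hn₀ m hm]
    exact ⟨g, ⟨hgJ, Ideal.mem_span_singleton.mpr hgd⟩, rfl⟩
  have hrange : Set.range (fun i : {x // x ∈ S} => coeff n₀ (h i)) = (S : Set R) := by
    have he : (fun i : {x // x ∈ S} => coeff n₀ (h i)) = fun i => i.1 :=
      funext fun i => hch i
    rw [he]
    ext x
    simp
  have : coeff m g ∈ Submodule.span R
      (Set.range (fun i : {x // x ∈ S} => coeff n₀ (h i))) := by
    rw [hrange, hS]; exact hmem
  obtain ⟨c, hc⟩ := Submodule.mem_span_range_iff_exists_fun R |>.mp this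
  exact ⟨c, by rw [← hc]; exact Finset.sum_congr rfl fun i _ => (smul_eq_mul (c i) (coeff n₀ (h i))).symm ▸ rfl⟩

/-- Finitely generated coefficient criterion for membership in `I·R⟦X⟧`. -/
theorem mem_map_C_of_coeff_mem (I : Ideal R) (hI : I.FG) (f : R⟦X⟧)
    (h : ∀ n, coeff n f ∈ I) : f ∈ Ideal.map (C (R := R)) I := by
  classical
  obtain ⟨S, hS⟩ := hI
  have hex : ∀ n, ∃ cc : R → R, ∑ i ∈ S, cc i • i = coeff n f := fun n =>
    (Submodule.mem_span_finset.mp (by rw [Ideal.submodule_span_eq, hS]; exact h n)).imp fun _ h => h.2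
  choose cc hcc using hex
  have hf : f = ∑ i ∈ S, C i * mk (fun n => cc n i) := by
    ext n
    rw [map_sum, ← hcc n]
    refine Finset.sum_congr rfl fun i _ => ?_
    rw [coeff_C_mul, coeff_mk, smul_eq_mul, mul_comm]
  rw [hf]
  exact Ideal.sum_mem _ fun i hi => Ideal.mul_mem_right _ _
    (Ideal.mem_map_of_mem _ (hS ▸ Ideal.subset_span hi))

section Taylor

theorem coeff_derivativeFun' (f : R⟦X⟧) (n : ℕ) :
    coeff n (derivativeFun f) = coeff (n + 1) f * (n + 1) := coeff_derivative f n

theorem derivativeFun_C' (r : R) : derivativeFun (C r : R⟦X⟧) = 0 := derivative_C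

theorem derivativeFun_X' : derivativeFun (X : R⟦X⟧) = 1 := by
  ext n
  rw [coeff_derivativeFun', coeff_X, coeff_one]
  rcases n with _ | n <;> simp

theorem derivativeFun_X_pow (n : ℕ) :
    derivativeFun ((X : R⟦X⟧) ^ (n + 1)) = ((n + 1 : ℕ) : R⟦X⟧) * (X : R⟦X⟧) ^ n := by
  induction n with
  | zero => simp [derivativeFun_X']
  | succ n ih =>
    rw [pow_succ, derivativeFun_mul, ih, derivativeFun_X', smul_eq_mul, smul_eq_mul]
    push_cast
    ring

theorem coeff_zero_iterate (n : ℕ) (f : R⟦X⟧) :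
    coeff 0 (derivativeFun^[n] f) = coeff n f * (n.factorial : R) := by
  induction n generalizing f with
  | zero => simp
  | succ n ih =>
    rw [Function.iterate_succ_apply, ih, coeff_derivativeFun', Nat.factorial_succ]
    push_cast
    ring

theorem iterate_mem (J : Ideal R⟦X⟧) (hJ : ∀ g ∈ J, derivativeFun g ∈ J)
    {f : R⟦X⟧} (hf : f ∈ J) (n : ℕ) : derivativeFun^[n] f ∈ J := by
  induction n with
  | zero => exact hf
  | succ n ih => rw [Function.iterate_succ_apply']; exact hJ _ ih

theorem derivativeFun_C_mul (a : R) (g : R⟦X⟧) :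
    derivativeFun (C a * g) = C a * derivativeFun g := by
  rw [derivativeFun_mul, derivativeFun_C', smul_zero, add_zero, smul_eq_mul]

variable [Algebra ℚ R]

/-- The rational Taylor coefficients `(-1)^n/n!`. -/
def cc (n : ℕ) : ℚ := (-1) ^ n / n.factorial

theorem cc_zero : cc 0 = 1 := by simp [cc]

theorem cc_succ (n : ℕ) : cc (n + 1) * ((n + 1 : ℕ) : ℚ) = - cc n := by
  have h1 : ((n.factorial : ℚ)) ≠ 0 := Nat.cast_ne_zero.mpr n.factorial_ne_zero
  have h2 : (((n + 1 : ℕ)) : ℚ) ≠ 0 := Nat.cast_ne_zero.mpr (Nat.succ_ne_zero n)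
  rw [cc, cc, Nat.factorial_succ]
  push_cast
  field_simp
  ring

/-- The Taylor approximation sums `∑_{n<N} (-1)^n/n! Xⁿ f⁽ⁿ⁾`. -/
noncomputable def T (f : R⟦X⟧) (N : ℕ) : R⟦X⟧ :=
  ∑ n ∈ Finset.range N, C (algebraMap ℚ R (cc n)) * ((X : R⟦X⟧) ^ n * derivativeFun^[n] f)

theorem derivativeFun_T (f : R⟦X⟧) (N : ℕ) :
    derivativeFun (T f (N + 1))
      = C (algebraMap ℚ R (cc N)) * ((X : R⟦X⟧) ^ N * derivativeFun^[N + 1] f) := by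
  induction N with
  | zero => simp [T, cc_zero]
  | succ N ih =>
    rw [T, Finset.sum_range_succ, ← T, derivativeFun_add, ih, derivativeFun_C_mul,
      derivativeFun_mul, smul_eq_mul, smul_eq_mul, derivativeFun_X_pow,
      ← Function.iterate_succ_apply' derivativeFun (N + 1) f]
    have key : C (algebraMap ℚ R (cc (N + 1))) * (((N + 1 : ℕ)) : R⟦X⟧)
        = - C (algebraMap ℚ R (cc N)) := by
      rw [← map_natCast (C (R := R)) (N + 1), ← map_mul, ← map_neg (C (R := R))]
      congr 1
      rw [← map_natCast (algebraMap ℚ R) (N + 1), ← map_mul, ← map_neg (algebraMap ℚ R)]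
      congr 1
      exact cc_succ N
    linear_combination ((X : R⟦X⟧) ^ N * derivativeFun^[N + 1] f) * key

theorem coeff_zero_T (f : R⟦X⟧) (N : ℕ) : coeff 0 (T f (N + 1)) = coeff 0 f := by
  rw [T, map_sum, Finset.sum_eq_single 0]
  · simp [cc_zero]
  · intro n _ hn
    rw [coeff_C_mul]
    have hz : coeff 0 ((X : R⟦X⟧) ^ n * derivativeFun^[n] f) = 0 :=
      X_pow_dvd_iff.mp (dvd_mul_right _ _) 0 (Nat.pos_of_ne_zero hn)
    rw [hz, mul_zero]
  · intro h0
    exact absurd (Finset.mem_range.mpr (Nat.succ_pos N)) h0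

theorem coeff_T_eq_zero (f : R⟦X⟧) (N k : ℕ) (hk1 : 1 ≤ k) (hk2 : k ≤ N) :
    coeff k (T f (N + 1)) = 0 := by
  obtain ⟨j, rfl⟩ : ∃ j, k = j + 1 := ⟨k - 1, (Nat.succ_pred_eq_of_pos hk1).symm⟩
  have hD := congrArg (coeff j) (derivativeFun_T f N)
  rw [coeff_derivativeFun', coeff_C_mul] at hD
  have hz : coeff j ((X : R⟦X⟧) ^ N * derivativeFun^[N + 1] f) = 0 :=
    X_pow_dvd_iff.mp (dvd_mul_right _ _) j (by omega)
  rw [hz, mul_zero] at hD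
  have hu : IsUnit ((j : R) + 1) := by
    have hc : ((j : R) + 1) = algebraMap ℚ R ((j : ℚ) + 1) := by
      rw [map_add, map_one, map_natCast]
    rw [hc]
    exact (isUnit_iff_ne_zero.mpr (by positivity)).map _
  obtain ⟨v, hv⟩ := hu.exists_right_inv
  calc coeff (j + 1) (T f (N + 1))
      = coeff (j + 1) (T f (N + 1)) * (((j : R) + 1) * v) := by rw [hv, mul_one]
    _ = (coeff (j + 1) (T f (N + 1)) * ((j : R) + 1)) * v := by ring
    _ = 0 := by rw [hD, zero_mul]

theorem C_const_mem [IsNoetherianRing R] (J : Ideal R⟦X⟧)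
    (hJ : ∀ g ∈ J, derivativeFun g ∈ J) {f : R⟦X⟧} (hf : f ∈ J) :
    C (coeff 0 f) ∈ J := by
  apply mem_of_forall_approx J
  intro N
  refine ⟨T f (N + 1), Ideal.sum_mem _ fun n _ =>
    Ideal.mul_mem_left _ _ (Ideal.mul_mem_left _ _ (iterate_mem J hJ hf n)), ?_⟩
  rw [X_pow_dvd_iff]
  intro m hm
  rw [map_sub, coeff_C]
  rcases m with _ | j
  · rw [coeff_zero_T, if_pos rfl, sub_self]
  · rw [if_neg (Nat.succ_ne_zero j),
      coeff_T_eq_zero f N (j + 1) (Nat.succ_le_succ (Nat.zero_le j)) (by omega),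
      zero_sub, neg_zero]

theorem coeff_mem [IsNoetherianRing R] (J : Ideal R⟦X⟧)
    (hJ : ∀ g ∈ J, derivativeFun g ∈ J) {f : R⟦X⟧} (hf : f ∈ J) (n : ℕ) :
    coeff n f ∈ Ideal.comap (C (R := R)) J := by
  have h2 := C_const_mem J hJ (iterate_mem J hJ hf n)
  rw [coeff_zero_iterate] at h2
  have h3 : coeff n f * (n.factorial : R) ∈ Ideal.comap (C (R := R)) J :=
    Ideal.mem_comap.mpr h2
  have hmul : (algebraMap ℚ R (1 / n.factorial)) * (n.factorial : R) = 1 := by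
    rw [← map_natCast (algebraMap ℚ R) n.factorial, ← map_mul, one_div,
      inv_mul_cancel₀ (Nat.cast_ne_zero.mpr n.factorial_ne_zero), map_one]
  have heq : coeff n f
      = algebraMap ℚ R (1 / n.factorial) * (coeff n f * (n.factorial : R)) := by
    rw [mul_comm (coeff n f), ← mul_assoc, hmul, one_mul]
  rw [heq]
  exact Ideal.mul_mem_left _ _ h3

end Taylor

end Stmt1Aux

theorem stmt1 (R : Type*) [CommRing R] [IsNoetherianRing R] [Algebra ℚ R]
    (J : Ideal (PowerSeries R))
    (hJ : ∀ f ∈ J, PowerSeries.derivativeFun f ∈ J) :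
    J = Ideal.map (PowerSeries.C : R →+* PowerSeries R) (Ideal.comap (PowerSeries.C : R →+* PowerSeries R) J) := by
  apply le_antisymm
  · intro f hf
    exact Stmt1Aux.mem_map_C_of_coeff_mem _ (IsNoetherian.noetherian _) f
      (fun n => Stmt1Aux.coeff_mem J hJ hf n)
  · exact Ideal.map_comap_le
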